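/- The kernel of any morphism between finitely generated free Z^2-persistence modules is itself a free Z^2-persistence module. -/

import Mathlib

open CategoryTheory Limits
open scoped Classical

/-- `ℤⁿ` with the product partial order. -/
abbrev Zn (n : ℕ) := Fin n → ℤ

noncomputable instance ZnCat (n : ℕ) : Category (Zn n) := Preorder.smallCategory _

/-- The category of `ℤⁿ`-persistence modules over a field `k`. -/
abbrev PersMod (n : ℕ) (k : Type) [Field k] :=
  @CategoryTheory.Functor (Zn n) (ZnCat n) (ModuleCat k) _

variable {n : ℕ} {k : Type} [Field k]

/-- The free persistence module `F(z)` generated at grade `z`: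
`F(z)_w = k` if `z ≤ w` and `0` otherwise, with identity structure maps. -/
noncomputable def Fgen (k : Type) [Field k] {n : ℕ} (z : Zn n) : PersMod n k where
  obj w := ModuleCat.of k (↥(if z ≤ w then (⊤ : Submodule k k) else ⊥))
  map {w w'} h := ModuleCat.ofHom (Submodule.inclusion (by
    by_cases hz : z ≤ w
    · simp [hz, hz.trans (leOfHom h)]
    · rw [if_neg hz]; exact bot_le))
  map_id := by intros; rfl
  map_comp := by intros; rfl

/-- The finite rank free persistence module `⊕ᵢ F(r i)` with basis elements of grades `r i`,
realized with components `Πᵢ F(r i)_w ⊆ k`. -/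
noncomputable def FreeMod (k : Type) [Field k] {n m : ℕ} (r : Fin m → Zn n) : PersMod n k where
  obj w := ModuleCat.of k (∀ i : Fin m, ↥(if r i ≤ w then (⊤ : Submodule k k) else ⊥))
  map {w w'} h := ModuleCat.ofHom (LinearMap.pi fun i =>
    (Submodule.inclusion (by
      by_cases hz : r i ≤ w
      · simp [hz, hz.trans (leOfHom h)]
      · rw [if_neg hz]; exact bot_le)).comp (LinearMap.proj i))
  map_id := by intros; rfl
  map_comp := by intros; rfl



open Submodule

section LinAlg

variable {k : Type} [Field k] {M : Type} [AddCommGroup M] [Module k M]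

/-- existence of a complement of `E` inside `V` when `E ≤ V`. -/
lemma exists_compl_inside (E V : Submodule k M) (hEV : E ≤ V) :
    ∃ C : Submodule k M, C ≤ V ∧ C ⊔ E = V ∧ C ⊓ E = ⊥ := by
  obtain ⟨C', hC'⟩ := Submodule.exists_isCompl (E.comap V.subtype)
  refine ⟨C'.map V.subtype, map_subtype_le _ _, ?_, ?_⟩
  · have : E = (E.comap V.subtype).map V.subtype := by
      rw [Submodule.map_comap_subtype, inf_eq_right.mpr hEV]
    rw [this, ← Submodule.map_sup, hC'.symm.sup_eq_top, Submodule.map_top,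
      Submodule.range_subtype]
  · have : E = (E.comap V.subtype).map V.subtype := by
      rw [Submodule.map_comap_subtype, inf_eq_right.mpr hEV]
    rw [this, ← Submodule.map_inf _ (Submodule.injective_subtype V), hC'.symm.inf_eq_bot,
      Submodule.map_bot]

end LinAlg

section Adapted

variable {k : Type} [Field k] {M : Type} [AddCommGroup M] [Module k M]

open Module Finset

lemma adapted_basis [FiniteDimensional k M]
    (D : ℤ → ℤ → Submodule k M)
    (hmono : ∀ a b a' b', a ≤ a' → b ≤ b' → D a b ≤ D a' b')
    (hinf : ∀ a b a' b', D a b ⊓ D a' b' ≤ D (min a a') (min b b'))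
    (lo hi : ℤ) (hlohi : lo ≤ hi)
    (hlo : ∀ a b, a < lo ∨ b < lo → D a b = ⊥)
    (hhi : ∀ a b, D a b = D (min a hi) (min b hi)) :
    ∃ (s : ℕ) (v : Fin s → M) (α β : Fin s → ℤ),
      LinearIndependent k v ∧
      ∀ a b : ℤ, D a b = span k (v '' {t | α t ≤ a ∧ β t ≤ b}) := by
  classical
  set N : ℕ := (hi - lo).toNat with hN
  have hhiN : hi = lo + N := by omega
  set Dn : ℕ → ℕ → Submodule k M := fun p q => D (lo - 1 + p) (lo - 1 + q) with hDn
  have hDn0l : ∀ q, Dn 0 q = ⊥ := fun q => hlo _ _ (Or.inl (by omega))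
  have hDn0r : ∀ p, Dn p 0 = ⊥ := fun p => hlo _ _ (Or.inr (by omega))
  have hDnmono : ∀ {p q p' q' : ℕ}, p ≤ p' → q ≤ q' → Dn p q ≤ Dn p' q' := by
    intro p q p' q' h1 h2
    exact hmono _ _ _ _ (by omega) (by omega)
  have hDninf : ∀ p q, Dn p (q+1) ⊓ Dn (p+1) q = Dn p q := by
    intro p q
    refine le_antisymm ?_ (le_inf (hDnmono le_rfl (by omega)) (hDnmono (by omega) le_rfl))
    refine le_trans (hinf _ _ _ _) (le_of_eq ?_)
    show D _ _ = D _ _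
    congr 1 <;> push_cast <;> omega
  -- complements
  have hEle : ∀ p q : ℕ, Dn p (q+1) ⊔ Dn (p+1) q ≤ Dn (p+1) (q+1) :=
    fun p q => sup_le (hDnmono (by omega) le_rfl) (hDnmono le_rfl (by omega))
  choose C hCle hCsup hCinf using fun p q =>
    exists_compl_inside (Dn p (q+1) ⊔ Dn (p+1) q) (Dn (p+1) (q+1)) (hEle p q)
  obtain ⟨S, hS⟩ : ∃ S : ℕ → ℕ → Submodule k M, ∀ p q, S p q =
      (Finset.range p ×ˢ Finset.range q).sup (fun z => C z.1 z.2) :=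
    ⟨_, fun _ _ => rfl⟩
  have hleS : ∀ p q z1 z2 : ℕ, z1 < p → z2 < q → C z1 z2 ≤ S p q := by
    intro p q z1 z2 h1 h2
    rw [hS]
    exact Finset.le_sup (f := fun z => C z.1 z.2) (b := (z1, z2))
      (Finset.mem_product.mpr ⟨Finset.mem_range.mpr h1, Finset.mem_range.mpr h2⟩)
  have hSle : ∀ (p q : ℕ) (A : Submodule k M),
      (∀ z1 z2 : ℕ, z1 < p → z2 < q → C z1 z2 ≤ A) → S p q ≤ A := by
    intro p q A hA
    rw [hS]
    refine Finset.sup_le ?_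
    rintro ⟨z1, z2⟩ hz
    simp only [Finset.mem_product, Finset.mem_range] at hz
    exact hA _ _ hz.1 hz.2
  have hSmono : ∀ {p q p' q' : ℕ}, p ≤ p' → q ≤ q' → S p q ≤ S p' q' := by
    intro p q p' q' h1 h2
    exact hSle _ _ _ fun z1 z2 e1 e2 => hleS _ _ _ _ (by omega) (by omega)
  have hSbot : ∀ p q : ℕ, p = 0 ∨ q = 0 → S p q = ⊥ := by
    intro p q h
    refine le_antisymm (hSle _ _ _ fun z1 z2 e1 e2 => by omega) bot_le
  have claim1 : ∀ p q : ℕ, Dn p q = S p q := by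
    have key : ∀ n p q : ℕ, p + q ≤ n → Dn p q = S p q := by
      intro n
      induction n with
      | zero =>
        intro p q h
        obtain ⟨rfl, rfl⟩ : p = 0 ∧ q = 0 := by omega
        rw [hDn0l, hSbot _ _ (Or.inl rfl)]
      | succ n ih =>
        intro p q h
        match p, q with
        | 0, q => rw [hDn0l, hSbot _ _ (Or.inl rfl)]
        | p+1, 0 => rw [hDn0r, hSbot _ _ (Or.inr rfl)]
        | p+1, q+1 =>
          refine le_antisymm ?_ ?_
          · rw [← hCsup p q]
            refine sup_le (hleS _ _ _ _ (by omega) (by omega)) (sup_le ?_ ?_)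
            · rw [ih p (q+1) (by omega)]
              exact hSmono (by omega) le_rfl
            · rw [ih (p+1) q (by omega)]
              exact hSmono le_rfl (by omega)
          · refine hSle _ _ _ ?_
            intro z1 z2 hz1 hz2
            rcases lt_or_ge z1 p with h1 | h1
            · have : C z1 z2 ≤ S p (q+1) := hleS _ _ _ _ (by omega) (by omega)
              rw [← ih p (q+1) (by omega)] at this
              exact this.trans (hDnmono (by omega) le_rfl)
            · rcases lt_or_ge z2 q with h2 | h2
              · have : C z1 z2 ≤ S (p+1) q := hleS _ _ _ _ (by omega) (by omega)
                rw [← ih (p+1) q (by omega)] at this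
                exact this.trans (hDnmono le_rfl (by omega))
              · obtain ⟨rfl, rfl⟩ : z1 = p ∧ z2 = q := by omega
                exact hCle z1 z2
    exact fun p q => key (p + q) p q le_rfl
  -- dimension bookkeeping
  have frk : ∀ {A B : Submodule k M}, A = B → Module.finrank k A = Module.finrank k B := by
    rintro A B rfl; rfl
  have hdim : ∀ p q : ℕ, Module.finrank k (C p q) +
      (Module.finrank k (Dn p (q+1)) + Module.finrank k (Dn (p+1) q)) =
      Module.finrank k (Dn (p+1) (q+1)) + Module.finrank k (Dn p q) := by
    intro p q
    have h1 := Submodule.finrank_sup_add_finrank_inf_eq (C p q) (Dn p (q+1) ⊔ Dn (p+1) q)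
    rw [hCsup p q, hCinf p q] at h1
    rw [finrank_bot k M] at h1
    have h2 := Submodule.finrank_sup_add_finrank_inf_eq (Dn p (q+1)) (Dn (p+1) q)
    rw [frk (hDninf p q)] at h2
    omega
  have row : ∀ p Q : ℕ, (∑ q ∈ Finset.range Q, Module.finrank k (C p q)) +
      Module.finrank k (Dn p Q) = Module.finrank k (Dn (p+1) Q) := by
    intro p Q
    induction Q with
    | zero =>
      have e0 := frk (hDn0r p)
      have e1 := frk (hDn0r (p+1))
      rw [finrank_bot k M] at e0 e1
      simp [e0, e1]
    | succ Q ih =>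
      rw [Finset.sum_range_succ]
      have := hdim p Q
      omega
  have tot : ∀ P Q : ℕ, (∑ p ∈ Finset.range P, ∑ q ∈ Finset.range Q,
      Module.finrank k (C p q)) = Module.finrank k (Dn P Q) := by
    intro P Q
    induction P with
    | zero =>
      have e0 := frk (hDn0l Q)
      rw [finrank_bot k M] at e0
      simp [e0]
    | succ P ih =>
      rw [Finset.sum_range_succ]
      have := row P Q
      omega
  -- the basis family
  set T := (z : Fin (N+1) × Fin (N+1)) × Fin (Module.finrank k (C z.1.val z.2.val)) with hT
  obtain ⟨v0, hv0⟩ : ∃ v0 : T → M, ∀ t : T,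
      v0 t = ((Module.finBasis k (C t.1.1.val t.1.2.val)) t.2 : M) := ⟨_, fun _ => rfl⟩
  have hmemC : ∀ t : T, v0 t ∈ C t.1.1.val t.1.2.val := by
    intro t; rw [hv0]; exact SetLike.coe_mem _
  have hspanC : ∀ p q : ℕ, Submodule.span k
      (Set.range (fun i : Fin (Module.finrank k (C p q)) =>
        ((Module.finBasis k (C p q)) i : M))) = C p q := by
    intro p q
    have e : (fun i : Fin (Module.finrank k (C p q)) =>
        ((Module.finBasis k (C p q)) i : M)) =
        (C p q).subtype ∘ (Module.finBasis k (C p q)) := rfl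
    rw [e, Set.range_comp, ← Submodule.map_span, Basis.span_eq, Submodule.map_top,
      Submodule.range_subtype]
  have hsub : ∀ pa pb : ℕ, pa ≤ N+1 → pb ≤ N+1 →
      Submodule.span k (v0 '' {t : T | (t.1.1 : ℕ) < pa ∧ (t.1.2 : ℕ) < pb}) = S pa pb := by
    intro pa pb hpa hpb
    apply le_antisymm
    · rw [Submodule.span_le]
      rintro x ⟨t, ht, rfl⟩
      exact hleS pa pb _ _ ht.1 ht.2 (hmemC t)
    · refine hSle _ _ _ ?_
      intro z1 z2 h1 h2
      rw [← hspanC z1 z2, Submodule.span_le]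
      rintro x ⟨i, rfl⟩
      refine Submodule.subset_span ?_
      refine ⟨⟨(⟨z1, by omega⟩, ⟨z2, by omega⟩), i⟩, ⟨h1, h2⟩, ?_⟩
      rw [hv0]
  have hmemTop : ∀ t : T, v0 t ∈ Dn (N+1) (N+1) := by
    intro t
    refine le_trans (hCle _ _) (hDnmono ?_ ?_) (hmemC t)
    · exact t.1.1.isLt
    · exact t.1.2.isLt
  obtain ⟨v', hv'⟩ : ∃ v' : T → (Dn (N+1) (N+1)), ∀ t, (v' t : M) = v0 t :=
    ⟨fun t => ⟨v0 t, hmemTop t⟩, fun _ => rfl⟩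
  have hspan0 : Submodule.span k (Set.range v0) = Dn (N+1) (N+1) := by
    have e : Set.range v0 = v0 '' {t : T | (t.1.1 : ℕ) < N+1 ∧ (t.1.2 : ℕ) < N+1} := by
      ext x
      constructor
      · rintro ⟨t, rfl⟩; exact ⟨t, ⟨t.1.1.isLt, t.1.2.isLt⟩, rfl⟩
      · rintro ⟨t, _, rfl⟩; exact ⟨t, rfl⟩
    rw [e, hsub (N+1) (N+1) le_rfl le_rfl, ← claim1]
  have hveq : (Dn (N+1) (N+1)).subtype ∘ v' = v0 := by
    funext t; exact hv' t
  have hspan' : Submodule.span k (Set.range v') = ⊤ := by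
    apply Submodule.map_injective_of_injective (Submodule.injective_subtype (Dn (N+1) (N+1)))
    rw [Submodule.map_span, Submodule.map_top, Submodule.range_subtype, ← Set.image_univ,
      ← Set.image_comp, Set.image_univ, hveq, hspan0]
  have cardT : Fintype.card T = Module.finrank k (Dn (N+1) (N+1)) := by
    rw [← tot (N+1) (N+1)]
    rw [Fintype.card_sigma]
    rw [Fintype.sum_prod_type]
    rw [← Fin.sum_univ_eq_sum_range
      (fun p => ∑ q ∈ Finset.range (N+1), Module.finrank k (C p q)) (N+1)]
    refine Finset.sum_congr rfl fun p _ => ?_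
    rw [← Fin.sum_univ_eq_sum_range (fun q => Module.finrank k (C p.val q)) (N+1)]
    refine Finset.sum_congr rfl fun q _ => ?_
    simp
  have hindep' : LinearIndependent k v' :=
    linearIndependent_of_top_le_span_of_card_eq_finrank (le_of_eq hspan'.symm) cardT
  have hindep0 : LinearIndependent k v0 := by
    rw [← hveq]
    exact hindep'.map' _ (Submodule.ker_subtype _)
  -- final assembly
  obtain ⟨e⟩ : Nonempty (Fin (Fintype.card T) ≃ T) := ⟨(Fintype.equivFin T).symm⟩
  refine ⟨Fintype.card T, v0 ∘ e, fun t => lo + ((e t).1.1 : ℕ), fun t => lo + ((e t).1.2 : ℕ),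
    hindep0.comp e e.injective, ?_⟩
  intro a b
  have himg : ∀ P : T → Prop,
      (v0 ∘ e) '' {t | P (e t)} = v0 '' {t | P t} := by
    intro P
    ext x
    constructor
    · rintro ⟨t, ht, rfl⟩; exact ⟨e t, ht, rfl⟩
    · rintro ⟨t, ht, rfl⟩
      exact ⟨e.symm t, by simpa using ht, by simp⟩
  by_cases hab : a < lo ∨ b < lo
  · rw [hlo a b hab]
    have hempty : {t : Fin (Fintype.card T) |
        (lo + ((e t).1.1 : ℕ) : ℤ) ≤ a ∧ (lo + ((e t).1.2 : ℕ) : ℤ) ≤ b} = ∅ := by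
      ext t
      simp only [Set.mem_setOf_eq, Set.mem_empty_iff_false, iff_false]
      rintro ⟨h1, h2⟩
      omega
    rw [hempty]
    simp
  · push_neg at hab
    obtain ⟨ha, hb⟩ := hab
    obtain ⟨pa, hpa⟩ : ∃ pa : ℕ, (pa : ℤ) = min a hi - lo + 1 :=
      ⟨(min a hi - lo + 1).toNat, by omega⟩
    obtain ⟨pb, hpb⟩ : ∃ pb : ℕ, (pb : ℤ) = min b hi - lo + 1 :=
      ⟨(min b hi - lo + 1).toNat, by omega⟩
    have hpa2 : pa ≤ N+1 := by omega
    have hpb2 : pb ≤ N+1 := by omega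
    have hDab : D a b = Dn pa pb := by
      rw [hhi a b]
      show D _ _ = D _ _
      congr 1 <;> omega
    rw [hDab, claim1, ← hsub pa pb hpa2 hpb2]
    have hset : {t : Fin (Fintype.card T) |
        (lo + ((e t).1.1 : ℕ) : ℤ) ≤ a ∧ (lo + ((e t).1.2 : ℕ) : ℤ) ≤ b} =
        {t | ((e t).1.1 : ℕ) < pa ∧ ((e t).1.2 : ℕ) < pb} := by
      ext t
      have h1 := (e t).1.1.isLt
      have h2 := (e t).1.2.isLt
      simp only [Set.mem_setOf_eq]
      omega
    rw [hset]
    exact (congrArg _ (himg fun t => ((t.1.1 : ℕ) < pa ∧ (t.1.2 : ℕ) < pb))).symm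

end Adapted

section Pers

variable {k : Type} [Field k]

/-- The coordinate-wise embedding of a component of `FreeMod` into `k^m`. -/
noncomputable def eW {n m : ℕ} (r : Fin m → Zn n) (w : Zn n) :
    (∀ j : Fin m, ↥(if r j ≤ w then (⊤ : Submodule k k) else ⊥)) →ₗ[k] (Fin m → k) :=
  LinearMap.pi fun j =>
    (Submodule.subtype (if r j ≤ w then (⊤ : Submodule k k) else ⊥)).comp (LinearMap.proj j)

lemma eW_apply {n m : ℕ} (r : Fin m → Zn n) (w : Zn n)
    (x : ∀ j : Fin m, ↥(if r j ≤ w then (⊤ : Submodule k k) else ⊥)) (j : Fin m) :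
    eW r w x j = (x j : k) := rfl

lemma eW_injective {n m : ℕ} (r : Fin m → Zn n) (w : Zn n) :
    Function.Injective (eW (k := k) r w) := by
  intro x y hxy
  funext j
  exact Subtype.ext (congrFun hxy j)

lemma eW_map {n m : ℕ} (r : Fin m → Zn n) {w w' : Zn n} (h : w ⟶ w')
    (x : (FreeMod k r).obj w) :
    eW r w' ((FreeMod k r).map h x) = eW r w x := by
  funext j
  rfl

lemma eW_zero_of_not_le {n m : ℕ} (r : Fin m → Zn n) (w : Zn n)
    (x : ∀ j : Fin m, ↥(if r j ≤ w then (⊤ : Submodule k k) else ⊥)) {j : Fin m}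
    (hj : ¬ r j ≤ w) : eW r w x j = 0 := by
  have h2 : ∀ y : ↥(if r j ≤ w then (⊤ : Submodule k k) else ⊥), (y : k) = 0 := by
    rw [if_neg hj]
    intro y
    exact (Submodule.mem_bot k).mp y.2
  simpa [eW_apply] using h2 (x j)

lemma eW_surj {n m : ℕ} (r : Fin m → Zn n) (w : Zn n) (v : Fin m → k)
    (hv : ∀ j, ¬ r j ≤ w → v j = 0) :
    ∃ x : (∀ j : Fin m, ↥(if r j ≤ w then (⊤ : Submodule k k) else ⊥)), eW r w x = v := by
  refine ⟨fun j => ⟨v j, ?_⟩, ?_⟩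
  · split_ifs with h
    · trivial
    · rw [hv j h]; exact Submodule.zero_mem _
  · funext j; rfl

lemma freeMap_injective {n m : ℕ} (r : Fin m → Zn n) {w w' : Zn n} (h : w ⟶ w') :
    Function.Injective ((FreeMod k r).map h) := by
  intro x y hxy
  apply eW_injective r w
  rw [← eW_map r h x, ← eW_map r h y, hxy]

variable {m' n' : ℕ} {rg : Fin m' → Zn 2} {cg : Fin n' → Zn 2}

/-- The kernel of `f` at grade `w`, transported into `k^{n'}`. -/
noncomputable def Dw (f : FreeMod k cg ⟶ FreeMod k rg) (w : Zn 2) : Submodule k (Fin n' → k) :=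
  Submodule.map (eW cg w) (LinearMap.ker (f.app w).hom)

lemma f_natural (f : FreeMod k cg ⟶ FreeMod k rg) {w w' : Zn 2} (h : w ⟶ w')
    (x : (FreeMod k cg).obj w) :
    f.app w' ((FreeMod k cg).map h x) = (FreeMod k rg).map h (f.app w x) := by
  have := f.naturality h
  exact congrFun (congrArg (fun (g : (FreeMod k cg).obj w ⟶ (FreeMod k rg).obj w') => (g : _ → _)) this) x

lemma Dw_mono (f : FreeMod k cg ⟶ FreeMod k rg) {w w' : Zn 2} (hw : w ≤ w') :
    Dw f w ≤ Dw f w' := by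
  rintro v ⟨x, hx, rfl⟩
  refine ⟨(FreeMod k cg).map (homOfLE hw) x, ?_, eW_map cg (homOfLE hw) x⟩
  have hx : f.app w x = 0 := hx
  show f.app w' ((FreeMod k cg).map (homOfLE hw) x) = 0
  rw [f_natural f (homOfLE hw) x, hx]
  exact map_zero _

lemma supp_of_mem_Dw (f : FreeMod k cg ⟶ FreeMod k rg) {w : Zn 2} {v : Fin n' → k}
    (hv : v ∈ Dw f w) {j : Fin n'} (hj : ¬ cg j ≤ w) : v j = 0 := by
  obtain ⟨x, _, rfl⟩ := hv
  exact eW_zero_of_not_le cg w x hj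

lemma Dw_trans (f : FreeMod k cg ⟶ FreeMod k rg) {w w'' : Zn 2} {v : Fin n' → k}
    (hv : v ∈ Dw f w) (hsupp : ∀ j, ¬ cg j ≤ w'' → v j = 0) : v ∈ Dw f w'' := by
  obtain ⟨x, hx, rfl⟩ := hv
  obtain ⟨y, hy⟩ := eW_surj cg w'' (eW cg w x) hsupp
  have hu : w ≤ w ⊔ w'' := le_sup_left
  have hu' : w'' ≤ w ⊔ w'' := le_sup_right
  have hxy : (FreeMod k cg).map (homOfLE hu') y = (FreeMod k cg).map (homOfLE hu) x := by
    apply eW_injective cg (w ⊔ w'')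
    exact (eW_map cg (homOfLE hu') y).trans (hy.trans (eW_map cg (homOfLE hu) x).symm)
  refine ⟨y, ?_, hy⟩
  have hx : f.app w x = 0 := hx
  show f.app w'' y = 0
  apply freeMap_injective rg (homOfLE hu')
  rw [← f_natural f (homOfLE hu') y, hxy, f_natural f (homOfLE hu) x, hx]
  rw [map_zero, map_zero]

end Pers

section Pers2

variable {k : Type} [Field k]

lemma pair_le_iff (a b : ℤ) (w : Zn 2) : (![a, b] : Zn 2) ≤ w ↔ a ≤ w 0 ∧ b ≤ w 1 := by
  constructor
  · intro h; exact ⟨by simpa using h 0, by simpa using h 1⟩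
  · rintro ⟨h1, h2⟩ i; fin_cases i <;> simpa

lemma le_pair_iff (u : Zn 2) (a b : ℤ) : u ≤ (![a, b] : Zn 2) ↔ u 0 ≤ a ∧ u 1 ≤ b := by
  constructor
  · intro h; exact ⟨by simpa using h 0, by simpa using h 1⟩
  · rintro ⟨h1, h2⟩ i; fin_cases i <;> simpa

lemma pair_eta (w : Zn 2) : (![w 0, w 1] : Zn 2) = w := by
  funext i; fin_cases i <;> rfl

lemma pair_inf (a b a' b' : ℤ) :
    ((![a, b] : Zn 2) ⊓ ![a', b']) = (![min a a', min b b'] : Zn 2) := by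
  funext i; fin_cases i <;> rfl

variable {m' n' : ℕ} {rg : Fin m' → Zn 2} {cg : Fin n' → Zn 2}

lemma Dw_inf (f : FreeMod k cg ⟶ FreeMod k rg) (w w' : Zn 2) :
    Dw f w ⊓ Dw f w' ≤ Dw f (w ⊓ w') := by
  rintro v ⟨hv1, hv2⟩
  apply Dw_trans f hv1
  intro j hj
  rw [le_inf_iff] at hj
  rcases not_and_or.mp hj with h | h
  exacts [supp_of_mem_Dw f hv1 h, supp_of_mem_Dw f hv2 h]

end Pers2

section GMap

variable {k : Type} [Field k] {n' s : ℕ}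

/-- The linear map `k^s → k^{n'}` with columns `v`. -/
noncomputable def matMap (v : Fin s → (Fin n' → k)) : (Fin s → k) →ₗ[k] (Fin n' → k) :=
  ∑ t, (LinearMap.proj t).smulRight (v t)

lemma matMap_apply (v : Fin s → (Fin n' → k)) (c : Fin s → k) :
    matMap v c = ∑ t, c t • v t := by
  simp [matMap, LinearMap.sum_apply]

lemma matMap_apply' (v : Fin s → (Fin n' → k)) (c : Fin s → k) (j : Fin n') :
    matMap v c j = ∑ t, c t * v t j := by
  rw [matMap_apply]
  simp [Finset.sum_apply]

variable (cg : Fin n' → Zn 2) (r : Fin s → Zn 2) (v : Fin s → (Fin n' → k))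

lemma gmap_mem (hsupp : ∀ t j, ¬ cg j ≤ r t → v t j = 0) (w : Zn 2) (x : (FreeMod k r).obj w) (j : Fin n') :
    matMap v (eW r w x) j ∈ (if cg j ≤ w then (⊤ : Submodule k k) else ⊥) := by
  split_ifs with h
  · trivial
  · rw [Submodule.mem_bot, matMap_apply']
    refine Finset.sum_eq_zero fun t _ => ?_
    by_cases ht : r t ≤ w
    · rw [hsupp t j (fun hc => h (hc.trans ht)), mul_zero]
    · rw [eW_zero_of_not_le r w x ht, zero_mul]

/-- The morphism component sending the generator at grade `r t` to the vector `v t`. -/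
noncomputable def gmap (hsupp : ∀ t j, ¬ cg j ≤ r t → v t j = 0) (w : Zn 2) : (FreeMod k r).obj w ⟶ (FreeMod k cg).obj w :=
  ModuleCat.ofHom (LinearMap.pi fun j =>
    LinearMap.codRestrict _ ((LinearMap.proj j).comp ((matMap v).comp (eW r w)))
      (fun x => gmap_mem cg r v hsupp w x j))

lemma eW_gmap (hsupp : ∀ t j, ¬ cg j ≤ r t → v t j = 0) (w : Zn 2) (x : (FreeMod k r).obj w) :
    eW cg w (gmap cg r v hsupp w x) = matMap v (eW r w x) := rfl

/-- `g` as a natural transformation. -/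
noncomputable def gnat (hsupp : ∀ t j, ¬ cg j ≤ r t → v t j = 0) : FreeMod k r ⟶ FreeMod k cg where
  app w := gmap cg r v hsupp w
  naturality := by
    intro w w' h
    apply ModuleCat.hom_ext
    apply LinearMap.ext
    intro x
    show (FreeMod k cg).map h (gmap cg r v hsupp w x) = gmap cg r v hsupp w' ((FreeMod k r).map h x)
    apply eW_injective cg w'
    rw [eW_map cg h, eW_gmap, eW_gmap, eW_map r h]

lemma gmap_injective (hsupp : ∀ t j, ¬ cg j ≤ r t → v t j = 0) (hindep : LinearIndependent k v) (w : Zn 2) :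
    Function.Injective (gmap cg r v hsupp w) := by
  intro x y hxy
  apply eW_injective r w
  have h1 : matMap v (eW r w x) = matMap v (eW r w y) := by
    rw [← eW_gmap cg r v hsupp w x, ← eW_gmap cg r v hsupp w y, hxy]
  have h2 : matMap v (eW r w x - eW r w y) = 0 := by
    rw [map_sub, h1, sub_self]
  rw [matMap_apply] at h2
  have h3 := Fintype.linearIndependent_iff.mp hindep _ h2
  funext t
  have h4 := h3 t
  simp only [Pi.sub_apply] at h4
  exact sub_eq_zero.mp h4

end GMap

section RangeG

variable {k : Type} [Field k] {n' s : ℕ}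
variable (cg : Fin n' → Zn 2) (r : Fin s → Zn 2) (v : Fin s → (Fin n' → k))

lemma map_eW_range_gmap (hsupp : ∀ t j, ¬ cg j ≤ r t → v t j = 0) (w : Zn 2) :
    Submodule.map (eW cg w) (LinearMap.range (gmap cg r v hsupp w).hom) =
    Submodule.span k (v '' {t | r t ≤ w}) := by
  apply le_antisymm
  · rintro _ ⟨y, ⟨x, rfl⟩, rfl⟩
    show matMap v (eW r w x) ∈ _
    rw [matMap_apply]
    refine Submodule.sum_mem _ fun t _ => ?_
    by_cases ht : r t ≤ w
    · exact Submodule.smul_mem _ _ (Submodule.subset_span ⟨t, ht, rfl⟩)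
    · rw [eW_zero_of_not_le r w x ht, zero_smul]
      exact Submodule.zero_mem _
  · rw [Submodule.span_le]
    rintro _ ⟨t, ht, rfl⟩
    have hsingle : ∀ t', ¬ r t' ≤ w → Pi.single (M := fun _ => k) t 1 t' = 0 := by
      intro t' ht'
      have hne : t' ≠ t := fun h => ht' (h ▸ ht)
      simp [Pi.single_apply, hne]
    obtain ⟨δ, hδ⟩ := eW_surj r w (Pi.single (M := fun _ => k) t 1) hsingle
    refine ⟨gmap cg r v hsupp w δ, ⟨δ, rfl⟩, ?_⟩
    show matMap v (eW r w δ) = _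
    rw [hδ, matMap_apply]
    simp [Pi.single_apply, ite_smul]

end RangeG

/-- The kernel of any morphism between finitely generated free `ℤ²`-persistence modules is
itself a (finitely generated) free `ℤ²`-persistence module. -/
theorem stmt_9 {m' n' : ℕ} (rg : Fin m' → Zn 2) (cg : Fin n' → Zn 2)
    (f : FreeMod k cg ⟶ FreeMod k rg) :
    ∃ (s : ℕ) (r : Fin s → Zn 2), Nonempty (Limits.kernel f ≅ FreeMod k r) := by
  classical
  -- bounds on the grades of the generators
  obtain ⟨B, hBdef⟩ : ∃ B : ℤ, B = ∑ j, (|cg j 0| + |cg j 1|) := ⟨_, rfl⟩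
  have hBnn : 0 ≤ B := hBdef ▸ Finset.sum_nonneg fun j _ => by positivity
  have hbound : ∀ (j : Fin n') (i : Fin 2), -B ≤ cg j i ∧ cg j i ≤ B := by
    intro j i
    have h1 : |cg j 0| + |cg j 1| ≤ B := hBdef ▸ Finset.single_le_sum
      (f := fun j => |cg j 0| + |cg j 1|) (fun j _ => by positivity) (Finset.mem_univ j)
    have h2 : |cg j i| ≤ B := by
      fin_cases i
      · have := abs_nonneg (cg j 1); simpa using le_trans (by omega) h1
      · have := abs_nonneg (cg j 0); simpa using le_trans (by omega) h1
    have h3 := le_abs_self (cg j i)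
    have h4 := neg_abs_le (cg j i)
    constructor <;> omega
  -- the adapted basis
  obtain ⟨s, v, α, β, hindep, hspan⟩ := adapted_basis (fun a b => Dw f ![a, b])
    (fun a b a' b' h1 h2 => Dw_mono f ((le_pair_iff _ _ _).mpr (by constructor <;> simpa)))
    (fun a b a' b' => by
      have := Dw_inf f ![a, b] ![a', b']
      rwa [pair_inf] at this)
    (-B) B (by omega)
    (by
      intro a b hab
      refine le_antisymm ?_ bot_le
      intro x hx
      rw [Submodule.mem_bot]
      funext j
      refine supp_of_mem_Dw f hx ?_
      rw [le_pair_iff]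
      rintro ⟨h1, h2⟩
      have hb0 := hbound j 0
      have hb1 := hbound j 1
      rcases hab with h | h <;> omega)
    (by
      intro a b
      refine le_antisymm ?_ (Dw_mono f ((le_pair_iff _ _ _).mpr (by
        constructor <;> simp)))
      intro x hx
      apply Dw_trans f hx
      intro j hj
      by_cases hcj : cg j ≤ ![a, b]
      · exfalso
        apply hj
        rw [le_pair_iff] at hcj ⊢
        have hb0 := hbound j 0
        have hb1 := hbound j 1
        omega
      · exact supp_of_mem_Dw f hx hcj)
  -- the grades
  obtain ⟨r, hrdef⟩ : ∃ r : Fin s → Zn 2, ∀ t, r t = ![α t, β t] := ⟨_, fun _ => rfl⟩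
  have hrle : ∀ t (w : Zn 2), r t ≤ w ↔ (α t ≤ w 0 ∧ β t ≤ w 1) := by
    intro t w
    rw [hrdef]
    exact pair_le_iff _ _ _
  have hvmem : ∀ t, v t ∈ Dw f ![α t, β t] := by
    intro t
    rw [hspan (α t) (β t)]
    exact Submodule.subset_span ⟨t, ⟨le_rfl, le_rfl⟩, rfl⟩
  have hsupp : ∀ t j, ¬ cg j ≤ r t → v t j = 0 := by
    intro t j hj
    rw [hrdef] at hj
    exact supp_of_mem_Dw f (hvmem t) hj
  have hDspan : ∀ w : Zn 2, Dw f w = Submodule.span k (v '' {t | r t ≤ w}) := by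
    intro w
    have h1 := hspan (w 0) (w 1)
    rw [pair_eta w] at h1
    rw [h1]
    congr 1
    refine congrArg (Set.image v) ?_
    ext t
    simp only [Set.mem_setOf_eq]
    rw [hrle]
  -- the kernel morphism
  have hrange : ∀ w, LinearMap.range (gmap cg r v hsupp w).hom = LinearMap.ker (f.app w).hom := by
    intro w
    apply Submodule.map_injective_of_injective (eW_injective cg w)
    exact (map_eW_range_gmap cg r v hsupp w).trans (hDspan w).symm
  have hgf : gnat cg r v hsupp ≫ f = 0 := by
    apply NatTrans.ext
    funext w
    apply ModuleCat.hom_ext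
    apply LinearMap.ext
    intro x
    have hmem : gmap cg r v hsupp w x ∈ LinearMap.ker (f.app w).hom := by
      rw [← hrange w]
      exact ⟨x, rfl⟩
    rw [LinearMap.mem_ker] at hmem
    show f.app w (gmap cg r v hsupp w x) = 0
    exact hmem
  -- the comparison with the categorical kernel
  have hθι := kernel.lift_ι f (gnat cg r v hsupp) hgf
  have hiso : ∀ w : Zn 2, IsIso ((kernel.lift f (gnat cg r v hsupp) hgf).app w) := by
    intro w
    have hcomp := kernelComparison_comp_ι f ((evaluation (Zn 2) (ModuleCat k)).obj w)
    have hci : IsIso (kernelComparison f ((evaluation (Zn 2) (ModuleCat k)).obj w)) :=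
      inferInstance
    have hκeq : (kernel.ι f).app w =
        kernelComparison f ((evaluation (Zn 2) (ModuleCat k)).obj w) ≫
          kernel.ι (((evaluation (Zn 2) (ModuleCat k)).obj w).map f) := hcomp.symm
    have hκinj : Function.Injective ((kernel.ι f).app w) := by
      rw [hκeq]
      haveI : Mono (kernelComparison f ((evaluation (Zn 2) (ModuleCat k)).obj w) ≫
          kernel.ι (((evaluation (Zn 2) (ModuleCat k)).obj w).map f)) := mono_comp _ _
      exact (ModuleCat.mono_iff_injective _).mp this
    have hιrange : LinearMap.range (kernel.ι (((evaluation (Zn 2) (ModuleCat k)).obj w).map f)).hom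
        = LinearMap.ker (f.app w).hom := by
      have h1 := ModuleCat.kernelIsoKer_hom_ker_subtype
        (((evaluation (Zn 2) (ModuleCat k)).obj w).map f)
      rw [← h1]
      have hsurj : Function.Surjective
          (ModuleCat.kernelIsoKer (((evaluation (Zn 2) (ModuleCat k)).obj w).map f)).hom :=
        (ModuleCat.epi_iff_surjective _).mp inferInstance
      rw [ModuleCat.hom_comp, LinearMap.range_comp, LinearMap.range_eq_top.mpr hsurj,
        Submodule.map_top, ModuleCat.hom_ofHom, Submodule.range_subtype]
      rfl
    have hκrange : LinearMap.range ((kernel.ι f).app w).hom = LinearMap.ker (f.app w).hom := by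
      rw [hκeq, ModuleCat.hom_comp, LinearMap.range_comp]
      have hsurj : Function.Surjective
          (kernelComparison f ((evaluation (Zn 2) (ModuleCat k)).obj w)) :=
        (ModuleCat.epi_iff_surjective _).mp inferInstance
      rw [LinearMap.range_eq_top.mpr hsurj, Submodule.map_top, hιrange]
    have hθκ : ∀ x, (kernel.ι f).app w ((kernel.lift f (gnat cg r v hsupp) hgf).app w x) =
        gmap cg r v hsupp w x := by
      intro x
      have h1 := NatTrans.congr_app hθι w
      rw [NatTrans.comp_app] at h1
      have h2 := congrArg (fun (h : (FreeMod k r).obj w ⟶ (FreeMod k cg).obj w) => h x) h1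
      exact h2
    have hinj : Function.Injective ((kernel.lift f (gnat cg r v hsupp) hgf).app w) := by
      intro x y hxy
      apply gmap_injective cg r v hsupp hindep w
      rw [← hθκ x, ← hθκ y, hxy]
    have hsurj : Function.Surjective ((kernel.lift f (gnat cg r v hsupp) hgf).app w) := by
      intro z
      have hz : (kernel.ι f).app w z ∈ LinearMap.range (gmap cg r v hsupp w).hom := by
        rw [hrange w, ← hκrange]
        exact ⟨z, rfl⟩
      obtain ⟨x, hx⟩ := hz
      refine ⟨x, hκinj ?_⟩
      rw [hθκ x]
      exact hx
    haveI : Mono ((kernel.lift f (gnat cg r v hsupp) hgf).app w) :=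
      (ModuleCat.mono_iff_injective _).mpr hinj
    haveI : Epi ((kernel.lift f (gnat cg r v hsupp) hgf).app w) :=
      (ModuleCat.epi_iff_surjective _).mpr hsurj
    exact isIso_of_mono_of_epi _
  haveI := hiso
  haveI : IsIso (kernel.lift f (gnat cg r v hsupp) hgf) :=
    NatIso.isIso_of_isIso_app _
  exact ⟨s, r, ⟨(asIso (kernel.lift f (gnat cg r v hsupp) hgf)).symm⟩⟩
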